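/- arXiv:1303.5366 — 3 statements merged into one kernel-verified Lean document; each statement's English description precedes it below -/
import Mathlib

section
/- (Shirshov's factorization theorem) Every nonempty word w over a linearly ordered alphabet can be written uniquely as a product w = c₁c₂⋯cₙ where each cᵢ is a Lyndon word (ALSW) and c₁ ⪯ c₂ ⪯ ⋯ ⪯ cₙ in the lexicographic ordering. -/
/-- The lexicographic ordering on words with the convention that a proper prefix is
greater than the word extending it (`u ≻ uv` for `v ≠ 1`): `gtLex u v` means `u ≻ v`. -/
def gtLex {X : Type*} [LinearOrder X] : List X → List X → Prop
  | [], [] => False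
  | [], _ :: _ => True
  | _ :: _, [] => False
  | a :: u, b :: v => b < a ∨ (a = b ∧ gtLex u v)

section
variable {X : Type*} [LinearOrder X]

lemma gtLex_irrefl : ∀ w : List X, ¬ gtLex w w
  | [] => by simp [gtLex]
  | a :: u => by simp [gtLex]; exact gtLex_irrefl u

lemma gtLex_trans : ∀ (a b c : List X), gtLex a b → gtLex b c → gtLex a c
  | [], [], _ => by simp [gtLex]
  | [], _::_, [] => fun _ h => absurd h (by simp [gtLex])
  | [], _::_, _::_ => by simp [gtLex]
  | _::_, [], _ => by simp [gtLex]
  | _::_, _::_, [] => fun _ h => absurd h (by simp [gtLex])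
  | a::u, b::v, c::t => by
    simp only [gtLex]
    rintro (h1 | ⟨rfl, h1⟩) (h2 | ⟨rfl, h2⟩)
    · exact Or.inl (h2.trans h1)
    · exact Or.inl h1
    · exact Or.inl h2
    · exact Or.inr ⟨rfl, gtLex_trans u v t h1 h2⟩

lemma gtLex_asymm {a b : List X} (h1 : gtLex a b) (h2 : gtLex b a) : False :=
  gtLex_irrefl a (gtLex_trans a b a h1 h2)

lemma gtLex_tri : ∀ (a b : List X), a = b ∨ gtLex a b ∨ gtLex b a
  | [], [] => Or.inl rfl
  | [], _::_ => Or.inr (Or.inl (by simp [gtLex]))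
  | _::_, [] => Or.inr (Or.inr (by simp [gtLex]))
  | a::u, b::v => by
    rcases lt_trichotomy a b with h | rfl | h
    · exact Or.inr (Or.inr (by simp [gtLex]; exact Or.inl h))
    · rcases gtLex_tri u v with h | h | h
      · exact Or.inl (by rw [h])
      · exact Or.inr (Or.inl (by simp [gtLex]; exact h))
      · exact Or.inr (Or.inr (by simp [gtLex]; exact h))
    · exact Or.inr (Or.inl (by simp [gtLex]; exact Or.inl h))

lemma gtLex_prefix : ∀ (u t : List X), t ≠ [] → gtLex u (u ++ t)
  | [], [], h => absurd rfl h
  | [], _::_, _ => by simp [gtLex]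
  | a::u, t, h => by simp [gtLex]; exact gtLex_prefix u t h

lemma gtLex_append : ∀ (u v : List X), gtLex u v → ¬ u <+: v → ∀ s t, gtLex (u++s) (v++t)
  | [], v, _, hp => absurd (List.nil_prefix) hp
  | _::_, [], h, _ => absurd h (by simp [gtLex])
  | a::u, b::v, h, hp => by
    intro s t
    simp only [gtLex, List.cons_append] at h ⊢
    rcases h with h | ⟨rfl, h⟩
    · exact Or.inl h
    · refine Or.inr ⟨rfl, gtLex_append u v h ?_ s t⟩
      intro hpre
      exact hp (List.cons_prefix_cons.mpr ⟨rfl, hpre⟩)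

lemma gtLex_append_left : ∀ (u s t : List X), gtLex (u++s) (u++t) ↔ gtLex s t
  | [], _, _ => Iff.rfl
  | a::u, s, t => by simp [gtLex]; exact gtLex_append_left u s t

end
/-- `w` is an associative Lyndon–Shirshov word: `w` is nonempty and `w ≻ v ++ u` for every
factorization `w = u ++ v` into nonempty words. -/
def IsALSW {X : Type*} [LinearOrder X] (w : List X) : Prop :=
  w ≠ [] ∧ ∀ u v : List X, u ≠ [] → v ≠ [] → w = u ++ v → gtLex w (v ++ u)

section
variable {X : Type*} [LinearOrder X]

lemma IsALSW.gtLex_suffix {w u v : List X} (h : IsALSW w) (hu : u ≠ []) (hv : v ≠ [])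
    (hw : w = u ++ v) : gtLex w v := by
  have h1 : gtLex w (v ++ u) := h.2 u v hu hv hw
  rcases gtLex_tri w v with rfl | h2 | h2
  · exfalso
    have e1 := congrArg List.length hw
    rw [List.length_append] at e1
    have e2 := List.length_pos_iff.mpr hu
    omega
  · exact h2
  · exfalso
    by_cases hvp : v <+: w
    · obtain ⟨t, ht⟩ := hvp
      have htne : t ≠ [] := by
        intro h0
        subst h0
        rw [List.append_nil] at ht
        rw [← ht, List.self_eq_append_left] at hw
        exact hu hw
      have h3 : gtLex w (t ++ v) := h.2 v t hv htne ht.symm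
      have h4 : gtLex t u := by
        rw [← ht] at h1
        exact (gtLex_append_left v t u).mp h1
      have hlen : t.length = u.length := by
        have e1 := congrArg List.length hw
        have e2 := congrArg List.length ht
        rw [List.length_append] at e1 e2
        omega
      have hntu : ¬ t <+: u := by
        intro hpre
        have : t = u := hpre.eq_of_length hlen
        subst this
        exact gtLex_irrefl t h4
      have h5 : gtLex (t ++ v) (u ++ v) := gtLex_append t u h4 hntu v v
      rw [← hw] at h5
      exact gtLex_asymm h3 h5
    · have h5 : gtLex (v ++ u) (w ++ []) := gtLex_append v w h2 hvp u []
      rw [List.append_nil] at h5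
      exact gtLex_asymm h1 h5

lemma isALSW_of_suffix {w : List X} (hw : w ≠ [])
    (h : ∀ u v : List X, u ≠ [] → v ≠ [] → w = u ++ v → gtLex w v) : IsALSW w := by
  refine ⟨hw, fun u v hu hv heq => ?_⟩
  have h1 : gtLex w v := h u v hu hv heq
  have hnp : ¬ w <+: v := by
    intro hpre
    have hl := hpre.length_le
    have e1 := congrArg List.length heq
    rw [List.length_append] at e1
    have e2 := List.length_pos_iff.mpr hu
    omega
  have := gtLex_append w v h1 hnp [] u
  rwa [List.append_nil] at this

lemma IsALSW.append {u v : List X} (hu : IsALSW u) (hv : IsALSW v) (huv : gtLex u v) :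
    IsALSW (u ++ v) := by
  have core : gtLex (u ++ v) v := by
    by_cases hp : u <+: v
    · obtain ⟨m, hm⟩ := hp
      have hmne : m ≠ [] := by
        intro h0
        subst h0
        rw [List.append_nil] at hm
        subst hm
        exact gtLex_irrefl u huv
      have := (gtLex_append_left u v m).mpr (hv.gtLex_suffix hu.1 hmne hm.symm)
      rwa [hm] at this
    · have := gtLex_append u v huv hp v []
      rwa [List.append_nil] at this
  refine isALSW_of_suffix (by simp [hu.1]) ?_
  intro a b ha hb heq
  rcases List.append_eq_append_iff.mp heq.symm with ⟨k, hk1, hk2⟩ | ⟨k, hk1, hk2⟩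
  · -- u = a ++ k, b = k ++ v
    by_cases hk : k = []
    · subst hk
      rw [List.append_nil] at hk1
      rw [List.nil_append] at hk2
      rw [hk2]
      exact core
    · subst hk2
      have h1 : gtLex u k := hu.gtLex_suffix ha hk hk1
      have hnp : ¬ u <+: k := by
        intro hpre
        have hl := hpre.length_le
        have e1 := congrArg List.length hk1
        rw [List.length_append] at e1
        have e2 := List.length_pos_iff.mpr ha
        omega
      exact gtLex_append u k h1 hnp v v
  · -- a = u ++ k, v = k ++ b
    by_cases hk : k = []
    · subst hk
      rw [List.append_nil] at hk1
      rw [List.nil_append] at hk2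
      rw [← hk2]
      exact core
    · have h1 : gtLex v b := hv.gtLex_suffix hk hb hk2
      have h2 : gtLex u b := gtLex_trans _ _ _ huv h1
      by_cases hp : u <+: b
      · obtain ⟨m, hm⟩ := hp
        have hmne : m ≠ [] := by
          intro h0
          subst h0
          rw [List.append_nil] at hm
          subst hm
          exact gtLex_irrefl u h2
        rw [← hm]
        refine (gtLex_append_left u v m).mpr ?_
        refine hv.gtLex_suffix (u := k ++ u) (by simp [hk]) hmne ?_
        rw [hk2, ← hm, List.append_assoc]
      · have := gtLex_append u b h2 hp v []
        rwa [List.append_nil] at this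

end
section
variable {X : Type*} [LinearOrder X]

/-- Auxiliary: transitivity chain for `⪰`. -/
lemma ge_trans'' {a b c : List X} (h1 : a = b ∨ gtLex a b) (h2 : b = c ∨ gtLex b c) :
    a = c ∨ gtLex a c := by
  rcases h1 with rfl | h1
  · exact h2
  · rcases h2 with rfl | h2
    · exact Or.inr h1
    · exact Or.inr (gtLex_trans _ _ _ h1 h2)

lemma chain'_head_rel {α : Type*} {R : α → α → Prop} (hR : ∀ a b c, R a b → R b c → R a c) :
    ∀ (l : List α) (a : α), List.Chain' R (a :: l) → ∀ x ∈ l, R a x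
  | [], _, _, x, hx => absurd hx (List.not_mem_nil (a := x))
  | b :: l, a, h, x, hx => by
    have h' := List.isChain_cons_cons.mp h
    rcases List.mem_cons.mp hx with rfl | hx
    · exact h'.1
    · exact hR _ _ _ h'.1 (chain'_head_rel hR l b h'.2 x hx)

/-- Key lemma: leads to a contradiction cycle `q ≻ r ⪰ c ⪰ B ≻ q`. -/
lemma keyP (B q : List X)
    (hq : ∀ u v : List X, u ≠ [] → v ≠ [] → q = u ++ v → gtLex q v)
    (hBq : gtLex B q) :
    ∀ (cs : List (List X)), (∀ c ∈ cs, c ≠ [] ∧ (c = B ∨ gtLex c B)) →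
      ∀ r, r ≠ [] → r <+: cs.flatten → r <:+ q → r.length < q.length → False
  | [], _, r, hr, hpre, _, _ => by
    rw [List.flatten_nil, List.prefix_nil] at hpre
    exact hr hpre
  | c :: cs, hcs, r, hr, hpre, hsuf, hlen => by
    obtain ⟨hcne, hcB⟩ := hcs c (List.mem_cons_self (a := c) (l := cs))
    rw [List.flatten_cons] at hpre
    -- q ≻ r since r is a nonempty proper suffix of q
    obtain ⟨k, hk⟩ := hsuf
    have hkne : k ≠ [] := by
      intro h0
      subst h0
      rw [List.nil_append] at hk
      subst hk
      exact absurd rfl (Nat.ne_of_lt hlen)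
    have hqr : gtLex q r := hq k r hkne hr hk.symm
    by_cases hle : r.length ≤ c.length
    · have hrc : r <+: c :=
        List.prefix_of_prefix_length_le hpre (List.prefix_append c cs.flatten) hle
      obtain ⟨t, ht⟩ := hrc
      have hrgec : r = c ∨ gtLex r c := by
        rcases eq_or_ne t [] with rfl | htne
        · rw [List.append_nil] at ht
          exact Or.inl ht
        · rw [← ht]
          exact Or.inr (gtLex_prefix r t htne)
      have : q = q ∨ gtLex q q :=
        ge_trans'' (ge_trans'' (ge_trans'' (Or.inr hqr) hrgec) hcB) (Or.inr hBq)
      rcases this with _ | h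
      · exact gtLex_irrefl q (gtLex_trans _ _ _ hqr (by
          rcases ge_trans'' (ge_trans'' hrgec hcB) (Or.inr hBq) with rfl | h'
          · exact hqr
          · exact h'))
      · exact gtLex_irrefl q h
    · push_neg at hle
      have hcr : c <+: r :=
        List.prefix_of_prefix_length_le (List.prefix_append c cs.flatten) hpre hle.le
      obtain ⟨r', hr'⟩ := hcr
      have hr'ne : r' ≠ [] := by
        intro h0
        subst h0
        rw [List.append_nil] at hr'
        subst hr'
        exact absurd rfl (Nat.ne_of_lt hle)
      have hr'pre : r' <+: cs.flatten := by
        rw [← hr'] at hpre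
        exact (List.prefix_append_right_inj c).mp hpre
      have hr'suf : r' <:+ q := by
        refine List.IsSuffix.trans ?_ ⟨k, hk⟩
        exact ⟨c, hr'⟩
      have hr'len : r'.length < q.length := by
        have := congrArg List.length hr'
        rw [List.length_append] at this
        have := List.length_pos_iff.mpr hcne
        have hrq := List.IsSuffix.length_le (⟨k, hk⟩ : r <:+ q)
        omega
      exact keyP B q hq hBq cs (fun x hx => hcs x (List.mem_cons_of_mem c hx)) r' hr'ne
        hr'pre hr'suf hr'len

/-- The head of a nondecreasing ALSW factorization is the longest ALSW prefix. -/
lemma head_longest {c : List X} {cs : List (List X)}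
    (hALSW : ∀ x ∈ c :: cs, IsALSW x)
    (hchain : List.Chain' (fun a b => a = b ∨ gtLex b a) (c :: cs))
    {q : List X} (hq : IsALSW q) (hpre : q <+: (c :: cs).flatten) :
    q.length ≤ c.length := by
  by_contra hlt
  push_neg at hlt
  have hc := hALSW c (List.mem_cons_self (a := c) (l := cs))
  rw [List.flatten_cons] at hpre
  have hcq : c <+: q :=
    List.prefix_of_prefix_length_le (List.prefix_append c cs.flatten) hpre hlt.le
  obtain ⟨r, hrq⟩ := hcq
  have hrne : r ≠ [] := by
    intro h0
    subst h0
    rw [List.append_nil] at hrq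
    subst hrq
    exact absurd rfl (Nat.ne_of_lt hlt)
  have hBq : gtLex c q := by
    rw [← hrq]
    exact gtLex_prefix c r hrne
  have hrpre : r <+: cs.flatten := by
    rw [← hrq] at hpre
    exact (List.prefix_append_right_inj c).mp hpre
  have hrsuf : r <:+ q := ⟨c, hrq⟩
  have hrlen : r.length < q.length := by
    have := congrArg List.length hrq
    rw [List.length_append] at this
    have := List.length_pos_iff.mpr hc.1
    omega
  refine keyP c q (fun u v hu hv he => hq.gtLex_suffix hu hv he) hBq cs ?_ r hrne hrpre
    hrsuf hrlen
  intro x hx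
  refine ⟨(hALSW x (List.mem_cons_of_mem c hx)).1, ?_⟩
  have := chain'_head_rel (R := fun a b => a = b ∨ gtLex b a)
    (fun a b c h1 h2 => ?_) cs c hchain x hx
  · rcases this with rfl | h
    · exact Or.inl rfl
    · exact Or.inr h
  · rcases h1 with rfl | h1
    · exact h2
    · rcases h2 with rfl | h2
      · exact Or.inr h1
      · exact Or.inr (gtLex_trans _ _ _ h2 h1)

lemma unique_fact : ∀ (cs ds : List (List X)),
    (∀ c ∈ cs, IsALSW c) → List.Chain' (fun c d => c = d ∨ gtLex d c) cs →
    (∀ c ∈ ds, IsALSW c) → List.Chain' (fun c d => c = d ∨ gtLex d c) ds →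
    cs.flatten = ds.flatten → cs = ds
  | [], [], _, _, _, _, _ => rfl
  | [], d :: ds, _, _, hd, _, hf => by
    exfalso
    rw [List.flatten_nil, List.flatten_cons] at hf
    exact (hd d (List.mem_cons_self (a := d) (l := ds))).1 (List.append_eq_nil_iff.mp hf.symm).1
  | c :: cs, [], hc, _, _, _, hf => by
    exfalso
    rw [List.flatten_nil, List.flatten_cons] at hf
    exact (hc c (List.mem_cons_self (a := c) (l := cs))).1 (List.append_eq_nil_iff.mp hf).1
  | c :: cs, d :: ds, hcA, hcC, hdA, hdC, hf => by
    have hd1 : d <+: (c :: cs).flatten := by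
      rw [hf, List.flatten_cons]
      exact List.prefix_append d ds.flatten
    have hc1 : c <+: (d :: ds).flatten := by
      rw [← hf, List.flatten_cons]
      exact List.prefix_append c cs.flatten
    have h1 : d.length ≤ c.length :=
      head_longest hcA hcC (hdA d (List.mem_cons_self (a := d) (l := ds))) hd1
    have h2 : c.length ≤ d.length :=
      head_longest hdA hdC (hcA c (List.mem_cons_self (a := c) (l := cs))) hc1
    have hcd : c = d := by
      refine List.IsPrefix.eq_of_length ?_ (le_antisymm h2 h1)
      rw [List.flatten_cons] at hc1
      exact List.prefix_of_prefix_length_le hc1 (List.prefix_append d ds.flatten) h2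
    subst hcd
    have hftail : cs.flatten = ds.flatten := by
      rw [List.flatten_cons, List.flatten_cons] at hf
      exact List.append_cancel_left hf
    have := unique_fact cs ds (fun x hx => hcA x (List.mem_cons_of_mem c hx)) hcC.tail
      (fun x hx => hdA x (List.mem_cons_of_mem c hx)) hdC.tail hftail
    rw [this]

end
section
variable {X : Type*} [LinearOrder X]

open Classical in
lemma not_chain'_decomp {α : Type*} {R : α → α → Prop} :
    ∀ {l : List α}, ¬ List.Chain' R l → ∃ p a b q, l = p ++ a :: b :: q ∧ ¬ R a b
  | [], h => absurd List.isChain_nil h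
  | [a], h => absurd (List.isChain_singleton a) h
  | a :: b :: l, h => by
    by_cases hab : R a b
    · have hnc : ¬ List.Chain' R (b :: l) := fun hh => h (List.isChain_cons_cons.mpr ⟨hab, hh⟩)
      obtain ⟨p, x, y, q, heq, hxy⟩ := not_chain'_decomp hnc
      exact ⟨a :: p, x, y, q, by rw [List.cons_append, heq], hxy⟩
    · exact ⟨[], a, b, l, rfl, hab⟩

lemma exists_fact : ∀ (n : ℕ) (cs : List (List X)), cs.length ≤ n → (∀ c ∈ cs, IsALSW c) →
    ∃ ds : List (List X), ds.flatten = cs.flatten ∧ (∀ c ∈ ds, IsALSW c) ∧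
      List.Chain' (fun c d => c = d ∨ gtLex d c) ds := by
  intro n
  induction n with
  | zero =>
    intro cs hlen _
    rw [Nat.le_zero, List.length_eq_zero_iff] at hlen
    subst hlen
    exact ⟨[], rfl, by simp, List.isChain_nil⟩
  | succ n ih =>
    intro cs hlen hALSW
    by_cases hc : List.Chain' (fun c d => c = d ∨ gtLex d c) cs
    · exact ⟨cs, rfl, hALSW, hc⟩
    · obtain ⟨p, a, b, q, rfl, hab⟩ := not_chain'_decomp hc
      push_neg at hab
      have hgt : gtLex a b := by
        rcases gtLex_tri a b with rfl | h | h
        · exact absurd rfl hab.1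
        · exact h
        · exact absurd h hab.2
      have hA : IsALSW a := hALSW a (by simp)
      have hB : IsALSW b := hALSW b (by simp)
      have hAB : IsALSW (a ++ b) := hA.append hB hgt
      have hlen' : (p ++ (a ++ b) :: q).length ≤ n := by
        simp only [List.length_append, List.length_cons] at hlen ⊢
        omega
      have hALSW' : ∀ c ∈ p ++ (a ++ b) :: q, IsALSW c := by
        intro c hcm
        rcases List.mem_append.mp hcm with h | h
        · exact hALSW c (by simp [h])
        · rcases List.mem_cons.mp h with rfl | h
          · exact hAB
          · exact hALSW c (by simp [h])
      obtain ⟨ds, hds1, hds2, hds3⟩ := ih (p ++ (a ++ b) :: q) hlen' hALSW'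
      refine ⟨ds, ?_, hds2, hds3⟩
      rw [hds1]
      simp [List.flatten_append, List.append_assoc]

lemma isALSW_singleton (x : X) : IsALSW [x] := by
  refine ⟨by simp, ?_⟩
  intro u v hu hv h
  exfalso
  have := congrArg List.length h
  rw [List.length_append] at this
  have h1 := List.length_pos_iff.mpr hu
  have h2 := List.length_pos_iff.mpr hv
  simp at this
  omega

end

/-- Shirshov's factorization theorem: every nonempty word factors uniquely as a
lexicographically nondecreasing product of Lyndon words (ALSWs). -/
theorem shirshov_factorization {X : Type*} [LinearOrder X] (w : List X) (hw : w ≠ []) :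
    ∃! cs : List (List X), cs.flatten = w ∧ (∀ c ∈ cs, IsALSW c) ∧
      cs.Chain' (fun c d => c = d ∨ gtLex d c) := by
  have hmap : (w.map fun x => [x]).flatten = w := by
    clear hw
    induction w with
    | nil => rfl
    | cons a w ihw => simp [ihw]
  obtain ⟨ds, hds1, hds2, hds3⟩ := exists_fact (w.map fun x => [x]).length _ le_rfl
    (by
      intro c hc
      obtain ⟨x, _, rfl⟩ := List.mem_map.mp hc
      exact isALSW_singleton x)
  refine ⟨ds, ⟨by rw [hds1, hmap], hds2, hds3⟩, ?_⟩
  intro cs ⟨h1, h2, h3⟩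
  exact unique_fact cs ds h2 h3 hds2 hds3 (by rw [h1, hds1, hmap])
end

section
/- Let k⟨X⟩ be the free associative algebra over a field k on a set X with a monomial well-ordering on X*, and let S ⊂ k⟨X⟩ be a set of monic polynomials such that every element f of the two-sided ideal Id(S) has leading word of the form a·s̄·b for some s ∈ S and a, b ∈ X*. Then the set Irr(S) of words u ∈ X* containing no s̄ (s ∈ S) as a factor is a k-linear basis of the quotient algebra k⟨X⟩/Id(S). -/
/-- The monomial `u ∈ X*` viewed in the free associative algebra `k⟨X⟩`. -/
noncomputable def mono (k : Type*) [Field k] {X : Type*} (u : FreeMonoid X) :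
    MonoidAlgebra k (FreeMonoid X) := MonoidAlgebra.of k (FreeMonoid X) u

/-- The leading (maximal) word of a nonzero polynomial. -/
noncomputable def lw {k X : Type*} [Field k] [LinearOrder (FreeMonoid X)]
    (f : MonoidAlgebra k (FreeMonoid X)) (hf : f ≠ 0) : FreeMonoid X :=
  f.coeff.support.max' (Finsupp.support_nonempty_iff.mpr (MonoidAlgebra.coeff_eq_zero.not.mpr hf))

/-- The two-sided ideal generated by `S`, described as the `k`-span of all `S`-words
`a·s·b` with `a, b ∈ X*`, `s ∈ S`. -/
noncomputable def idSpan {k X : Type*} [Field k]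
    (S : Set (MonoidAlgebra k (FreeMonoid X))) :
    Submodule k (MonoidAlgebra k (FreeMonoid X)) :=
  Submodule.span k {x | ∃ (a b : FreeMonoid X) (s : MonoidAlgebra k (FreeMonoid X)),
    s ∈ S ∧ x = mono k a * s * mono k b}

/-- `Irr S`: the words containing no leading word of an element of `S` as a factor. -/
def Irr {k X : Type*} [Field k] [LinearOrder (FreeMonoid X)]
    (S : Set (MonoidAlgebra k (FreeMonoid X))) : Set (FreeMonoid X) :=
  {u | ¬ ∃ (a b : FreeMonoid X) (s : MonoidAlgebra k (FreeMonoid X))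
    (_ : s ∈ S) (h0 : s ≠ 0), u = a * lw s h0 * b}

lemma conj_inj {X : Type*} (a b : FreeMonoid X) :
    Function.Injective (fun v : FreeMonoid X => a * v * b) := fun _ _ h =>
  mul_left_cancel (mul_right_cancel h)

lemma mono_mul_mono {k X : Type*} [Field k] (a b : FreeMonoid X)
    (s : MonoidAlgebra k (FreeMonoid X)) :
    (mono k a * s * mono k b).coeff = Finsupp.mapDomain (fun v => a * v * b) s.coeff := by
  induction s using MonoidAlgebra.induction with
  | zero => simp
  | single_add v c f hv hc ih =>
    simp only [mul_add, add_mul, MonoidAlgebra.coeff_add, ih, Finsupp.mapDomain_add,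
      MonoidAlgebra.coeff_single, Finsupp.mapDomain_single]
    congr 1
    simp only [mono, MonoidAlgebra.of_apply]
    rw [MonoidAlgebra.single_mul_single, MonoidAlgebra.single_mul_single, one_mul, mul_one]
    rfl


/-- Composition–Diamond lemma, (ii) ⇒ (iii): if every element of the two-sided ideal
generated by the monic set `S` has leading word containing some `s̄` (`s ∈ S`) as a factor,
then the `S`-irreducible words form a `k`-linear basis of `k⟨X|S⟩`. -/
theorem irr_is_basis_of_CD {k X : Type*} [Field k]
    [LinearOrder (FreeMonoid X)] [WellFoundedLT (FreeMonoid X)]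
    (hmul : ∀ u v w₁ w₂ : FreeMonoid X, u < v → w₁ * u * w₂ < w₁ * v * w₂)
    (S : Set (MonoidAlgebra k (FreeMonoid X)))
    (hS0 : ∀ s ∈ S, s ≠ 0)
    (hmonic : ∀ (s) (hs : s ∈ S), s.coeff (lw s (hS0 s hs)) = 1)
    (hCD : ∀ f ∈ idSpan S, ∀ hf : f ≠ 0, ∃ (a b : FreeMonoid X)
      (s : MonoidAlgebra k (FreeMonoid X)) (hs : s ∈ S),
        lw f hf = a * lw s (hS0 s hs) * b) :
    LinearIndependent k (fun u : Irr S =>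
      Submodule.Quotient.mk (p := idSpan S) (mono k (u : FreeMonoid X))) ∧
    Submodule.span k (Set.range fun u : Irr S =>
      Submodule.Quotient.mk (p := idSpan S) (mono k (u : FreeMonoid X))) = ⊤ := by
  classical
  have hdisj : Disjoint ((Finsupp.supported k k (Irr S)).map
      (MonoidAlgebra.coeffLinearEquiv k).symm.toLinearMap) (idSpan S) := by
    rw [Submodule.disjoint_def]
    intro f hf1 hf2
    obtain ⟨f', hf1', rfl⟩ := Submodule.mem_map.mp hf1
    by_contra hf0
    obtain ⟨a, b, s, hs, heq⟩ := hCD _ hf2 hf0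
    have hmem : lw _ hf0 ∈ f'.support := Finset.max'_mem _ _
    have hirr : lw _ hf0 ∈ Irr S := (Finsupp.mem_supported k f').mp hf1' hmem
    exact hirr ⟨a, b, s, hs, hS0 s hs, heq⟩
  constructor
  · -- linear independence
    have h0 : LinearIndependent k (fun u : FreeMonoid X =>
        (MonoidAlgebra.single u 1 : MonoidAlgebra k (FreeMonoid X))) := by
      have := (Finsupp.basisSingleOne (R := k) (ι := FreeMonoid X)).linearIndependent.map'
        (MonoidAlgebra.coeffLinearEquiv k).symm.toLinearMap (LinearEquiv.ker _)
      rw [Finsupp.coe_basisSingleOne] at this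
      exact this
    have h1 : LinearIndependent k (fun u : Irr S => mono k (u : FreeMonoid X)) := by
      have := h0.comp (Subtype.val : Irr S → FreeMonoid X) Subtype.val_injective
      simpa [mono, MonoidAlgebra.of_apply, Function.comp_def] using this
    have hker : Disjoint (Submodule.span k
        (Set.range fun u : Irr S => mono k (u : FreeMonoid X)))
        (LinearMap.ker (idSpan S).mkQ) := by
      rw [Submodule.ker_mkQ]
      refine Disjoint.mono_left ?_ hdisj
      rw [Finsupp.supported_eq_span_single, Submodule.map_span]
      refine Submodule.span_mono ?_
      rintro _ ⟨u, rfl⟩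
      exact ⟨_, ⟨u.1, u.2, rfl⟩, rfl⟩
    have h2 := h1.map hker
    simpa [Function.comp_def, Submodule.mkQ_apply] using h2
  · -- spanning
    set sp := Submodule.span k (Set.range fun u : Irr S =>
      Submodule.Quotient.mk (p := idSpan S) (mono k (u : FreeMonoid X))) with hsp
    have key : ∀ u : FreeMonoid X,
        Submodule.Quotient.mk (p := idSpan S) (MonoidAlgebra.single u (1:k)) ∈ sp := by
      intro u
      induction u using WellFoundedLT.induction with
      | _ u ih =>
      by_cases hu : u ∈ Irr S
      · exact Submodule.subset_span ⟨⟨u, hu⟩, by simp [mono, MonoidAlgebra.of_apply]⟩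
      · have hu' : ∃ (a b : FreeMonoid X) (s : MonoidAlgebra k (FreeMonoid X))
            (_ : s ∈ S) (h0 : s ≠ 0), u = a * lw s h0 * b := not_not.mp hu
        obtain ⟨a, b, s, hs, h0, hueq⟩ := hu'
        set w := lw s h0 with hw
        set g := mono k a * s * mono k b with hgdef
        have hgI : g ∈ idSpan S := Submodule.subset_span ⟨a, b, s, hs, rfl⟩
        have hgmap : g.coeff = Finsupp.mapDomain (fun v => a * v * b) s.coeff := mono_mul_mono a b s
        have hgu : g.coeff u = 1 := by
          rw [hgmap, hueq, Finsupp.mapDomain_apply (conj_inj a b)]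
          exact hmonic s hs
        set h := g - MonoidAlgebra.single u (1:k) with hh
        have hhsupp : ∀ w' ∈ h.coeff.support, w' < u := by
          intro w' hw'
          have hne : h.coeff w' ≠ 0 := Finsupp.mem_support_iff.mp hw'
          have hwu : w' ≠ u := by
            intro he
            apply hne
            rw [he, hh, MonoidAlgebra.coeff_sub, Finsupp.sub_apply, hgu, MonoidAlgebra.coeff_single,
              Finsupp.single_eq_same]
            ring
          have hg' : g.coeff w' ≠ 0 := by
            have hz : (MonoidAlgebra.single u (1:k) : MonoidAlgebra k (FreeMonoid X)).coeff w' = 0 := Finsupp.single_eq_of_ne' (Ne.symm hwu)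
            rw [hh, MonoidAlgebra.coeff_sub, Finsupp.sub_apply, hz, sub_zero] at hne
            exact hne
          have hmem : w' ∈ g.coeff.support := Finsupp.mem_support_iff.mpr hg'
          rw [hgmap] at hmem
          have := Finsupp.mapDomain_support hmem
          obtain ⟨v, hv, rfl⟩ := Finset.mem_image.mp this
          have hvw : v ≠ w := by
            intro he; exact hwu (by rw [he, hueq])
          have hvlt : v < w := lt_of_le_of_ne (Finset.le_max' _ _ hv) hvw
          rw [hueq]
          exact hmul v w a b hvlt
        have hhmem : h ∈ Submodule.span k
            ((fun w' => (MonoidAlgebra.single w' 1 : MonoidAlgebra k (FreeMonoid X))) ''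
              {x | x < u}) := by
          have h4 : h.coeff ∈ Finsupp.supported k k {x | x < u} :=
            (Finsupp.mem_supported k h.coeff).mpr (fun w' hw' => hhsupp w' hw')
          rw [Finsupp.supported_eq_span_single] at h4
          have h3 := Submodule.mem_map_of_mem
            (f := (MonoidAlgebra.coeffLinearEquiv k).symm.toLinearMap) h4
          rw [Submodule.map_span, Set.image_image] at h3
          exact h3
        have hhsp : Submodule.Quotient.mk (p := idSpan S) h ∈ sp := by
          have h2 := Submodule.mem_map_of_mem (f := (idSpan S).mkQ) hhmem
          rw [Submodule.map_span] at h2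
          refine Submodule.span_le.mpr ?_ h2
          rintro _ ⟨_, ⟨w', hw', rfl⟩, rfl⟩
          exact ih w' hw'
        have hgq : Submodule.Quotient.mk (p := idSpan S) g = 0 :=
          (Submodule.Quotient.mk_eq_zero _).mpr hgI
        have : Submodule.Quotient.mk (p := idSpan S) (MonoidAlgebra.single u (1:k)) =
            Submodule.Quotient.mk (p := idSpan S) g - Submodule.Quotient.mk (p := idSpan S) h := by
          rw [← Submodule.Quotient.mk_sub]
          congr 1
          exact (sub_sub_cancel g (MonoidAlgebra.single u 1)).symm
        rw [this, hgq, zero_sub]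
        exact neg_mem hhsp
    rw [eq_top_iff]
    rintro x -
    obtain ⟨f, rfl⟩ := Submodule.mkQ_surjective (idSpan S) x
    have hfmem : f ∈ Submodule.span k
        ((fun w' => (MonoidAlgebra.single w' 1 : MonoidAlgebra k (FreeMonoid X))) ''
          (Set.univ : Set (FreeMonoid X))) := by
      have h4 : f.coeff ∈ Finsupp.supported k k (Set.univ : Set (FreeMonoid X)) := by
        rw [Finsupp.supported_univ]
        trivial
      rw [Finsupp.supported_eq_span_single] at h4
      have h3 := Submodule.mem_map_of_mem
        (f := (MonoidAlgebra.coeffLinearEquiv k).symm.toLinearMap) h4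
      rw [Submodule.map_span, Set.image_image] at h3
      exact h3
    have h2 := Submodule.mem_map_of_mem (f := (idSpan S).mkQ) hfmem
    rw [Submodule.map_span] at h2
    refine Submodule.span_le.mpr ?_ h2
    rintro _ ⟨_, ⟨w', -, rfl⟩, rfl⟩
    exact key w'
end

section
/- (P. M. Cohn) Every left ideal of the free associative algebra k⟨X⟩ over a field k is a free left k⟨X⟩-module. -/
set_option linter.unusedSectionVars false

namespace CohnFreeIdeal

variable {X : Type*}

/-- Words: the additive free monoid on `X`, used as grading type. -/
abbrev W (X : Type*) := Additive (FreeMonoid X)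

def toL (a : W X) : List X := FreeMonoid.toList (Additive.toMul a)

def ofL (l : List X) : W X := Additive.ofMul (FreeMonoid.ofList l)

@[simp] lemma toL_ofL (l : List X) : toL (ofL l : W X) = l := rfl
@[simp] lemma ofL_toL (a : W X) : ofL (toL a) = a := rfl
@[simp] lemma toL_add (a b : W X) : toL (a + b) = toL a ++ toL b := rfl
@[simp] lemma toL_zero : toL (0 : W X) = [] := rfl

lemma toL_injective : Function.Injective (toL (X := X)) := fun a b h => by
  rw [← ofL_toL a, h, ofL_toL]

lemma eq_zero_of_toL_nil {u : W X} (h : toL u = []) : u = 0 := toL_injective h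

section Order

variable [LinearOrder X]

/-- Shortlex order on words. -/
def slt (a b : W X) : Prop :=
  (toL a).length < (toL b).length ∨
    ((toL a).length = (toL b).length ∧ List.Lex (· < ·) (toL a) (toL b))

lemma slt_irrefl (a : W X) : ¬ slt a a := by
  rintro (h | ⟨-, h⟩)
  · exact lt_irrefl _ h
  · exact irrefl_of (List.Lex (· < ·)) _ h

lemma slt_trichotomous (a b : W X) : slt a b ∨ a = b ∨ slt b a := by
    rcases lt_trichotomy (toL a).length (toL b).length with h | h | h
    · exact Or.inl (Or.inl h)
    · rcases trichotomous_of (List.Lex (· < ·) : List X → List X → Prop) (toL a) (toL b) with hl | hl | hl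
      · exact Or.inl (Or.inr ⟨h, hl⟩)
      · exact Or.inr (Or.inl (toL_injective hl))
      · exact Or.inr (Or.inr (Or.inr ⟨h.symm, hl⟩))
    · exact Or.inr (Or.inr (Or.inl h))
lemma slt_trans {a b c : W X} : slt a b → slt b c → slt a c := by
    rintro (hab | ⟨hab, hab'⟩) (hbc | ⟨hbc, hbc'⟩)
    · exact Or.inl (hab.trans hbc)
    · exact Or.inl (hbc ▸ hab)
    · exact Or.inl (hab ▸ hbc)
    · exact Or.inr ⟨hab.trans hbc, List.lex_trans (fun h1 h2 => lt_trans h1 h2) hab' hbc'⟩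

lemma slt_sto : IsStrictTotalOrder (W X) (slt (X := X)) where
  trichotomous a b h1 h2 := ((slt_trichotomous a b).resolve_left h1).resolve_right h2
  irrefl := slt_irrefl
  trans _ _ _ := slt_trans

noncomputable instance : LinearOrder (W X) :=
  letI := slt_sto (X := X)
  letI := Classical.decRel (slt (X := X))
  linearOrderOfSTO slt

lemma lt_iff_slt {a b : W X} : a < b ↔ slt a b := Iff.rfl

instance : OrderBot (W X) where
  bot := 0
  bot_le a := by
    refine le_of_not_gt ?_
    rintro (h | ⟨-, h⟩)
    · exact Nat.not_lt_zero _ h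
    · exact absurd (show List.Lex (· < ·) (toL a) [] from h) (by rintro ⟨⟩)

lemma lex_append_right_of_length_eq {s t : List X}
    (h : List.Lex (· < ·) s t) (hl : s.length = t.length) (u : List X) :
    List.Lex (· < ·) (s ++ u) (t ++ u) := by
  induction h with
  | nil => simp at hl
  | @cons a l₁ l₂ h ih =>
      exact List.Lex.cons (ih (by simpa using hl))
  | rel h => exact List.Lex.rel h

instance : AddLeftStrictMono (W X) := by
  constructor
  rintro c a b (h | ⟨he, hlex⟩)
  · exact Or.inl (by simp [toL_add]; omega)
  · exact Or.inr ⟨by simp [toL_add, he], by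
      simpa [toL_add] using List.Lex.append_left _ hlex (toL c)⟩

instance : AddRightStrictMono (W X) := by
  constructor
  rintro c a b (h | ⟨he, hlex⟩)
  · exact Or.inl (by simp [toL_add]; omega)
  · exact Or.inr ⟨by simp [toL_add, he], by
      simpa [toL_add] using lex_append_right_of_length_eq hlex he (toL c)⟩

section WF

variable [WellFoundedLT X]

lemma acc_of_length_le : ∀ n (a : W X), (toL a).length ≤ n → Acc slt a := by
  intro n
  induction n with
  | zero =>
      intro a ha
      constructor
      rintro b (h | ⟨he, hlex⟩)
      · omega
      · rw [List.length_eq_zero_iff.mp (Nat.le_zero.mp ha)] at hlex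
        exact absurd hlex (by rintro ⟨⟩)
  | succ n ih =>
      intro a ha
      rcases Nat.lt_or_ge (toL a).length (n + 1) with h | h
      · exact ih a (Nat.lt_succ_iff.mp h)
      · have hlen : (toL a).length = n + 1 := le_antisymm ha h
        obtain ⟨x, t, hxt⟩ : ∃ x t, toL a = x :: t := by
          cases hc : toL a with
          | nil => rw [hc] at hlen; simp at hlen
          | cons x t => exact ⟨x, t, rfl⟩
        have key : ∀ x : X, ∀ b : W X, Acc slt b → (toL b).length = n →
            Acc slt (ofL (x :: toL b)) := by
          intro x
          induction x using WellFoundedLT.induction with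
          | _ x ihx =>
            intro b hb
            induction hb with
            | intro c hc ihc =>
              intro hlc
              constructor
              rintro d (h | ⟨he, hlex⟩)
              · exact ih d (by simp at h; omega)
              · simp only [toL_ofL] at he hlex
                obtain ⟨y, s, hds⟩ : ∃ y s, toL d = y :: s := by
                  cases hcc : toL d with
                  | nil => rw [hcc] at he; simp [hlc] at he
                  | cons y s => exact ⟨y, s, rfl⟩
                rw [hds] at he hlex
                have hslen : s.length = n := by simp [hlc] at he; omega
                cases hlex with
                | cons hlex' =>
                  -- y = x, Lex s (toL c)
                  have hacc : Acc slt (ofL (x :: toL (ofL s : W X))) := by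
                    refine ihc (ofL s) ?_ (by simpa using hslen)
                    exact Or.inr ⟨by simpa [hslen] using hlc.symm, by simpa using hlex'⟩
                  simpa [← hds] using hacc
                | rel hyx =>
                  have hacc : Acc slt (ofL (y :: toL (ofL s : W X))) := by
                    refine ihx y hyx (ofL s) ?_ (by simpa using hslen)
                    exact ih (ofL s) (by simpa using hslen.le)
                  simpa [← hds] using hacc
        have := key x (ofL t) (ih (ofL t) (by simp [hxt] at hlen ⊢; omega))
          (by simp [hxt] at hlen ⊢; omega)
        simpa [← hxt] using this

lemma slt_wf : WellFounded (slt (X := X)) :=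
  ⟨fun a => acc_of_length_le (toL a).length a le_rfl⟩

instance : WellFoundedLT (W X) := ⟨slt_wf⟩

end WF

/-- Among words in `L`, every word factors as `u + s` with `s` "minimal"
(having no proper decomposition over `L`). -/
lemma exists_minimal_decomp [WellFoundedLT X] (L : Set (W X)) :
    ∀ a ∈ L, ∃ u s, (s ∈ L ∧ ∀ v b, b ∈ L → s = v + b → v = 0) ∧ a = u + s := by
  intro a
  induction a using WellFounded.induction (wellFounded_lt (α := W X)) with
  | _ a ih =>
    intro ha
    by_cases hmin : ∀ v b, b ∈ L → a = v + b → v = 0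
    · exact ⟨0, a, ⟨ha, hmin⟩, (zero_add a).symm⟩
    · push_neg at hmin
      obtain ⟨v, b, hbL, hab, hv⟩ := hmin
      have hlt : b < a := by
        refine lt_iff_slt.mpr (Or.inl ?_)
        have hvne : toL v ≠ [] := fun h => hv (eq_zero_of_toL_nil h)
        have : (toL a).length = (toL v).length + (toL b).length := by
          rw [hab]; simp
        have := List.length_pos_iff.mpr hvne
        omega
      obtain ⟨u', s, hS, rfl⟩ := ih b hlt hbL
      exact ⟨v + u', s, hS, by rw [hab, add_assoc]⟩

lemma minimal_decomp_unique_aux (L : Set (W X)) {u s u' s' : W X}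
    (hs : s ∈ L) (hs' : s' ∈ L ∧ ∀ v b, b ∈ L → s' = v + b → v = 0)
    (h : u + s = u' + s') (hlen : (toL s).length ≤ (toL s').length) : s' = s := by
  have h1 : toL s <:+ toL (u + s) := ⟨toL u, (toL_add u s).symm⟩
  have h2 : toL s' <:+ toL (u + s) := ⟨toL u', by rw [h]; exact (toL_add u' s').symm⟩
  obtain ⟨v, hv⟩ := List.suffix_of_suffix_length_le h1 h2 hlen
  have hdecomp : s' = ofL v + s := toL_injective (by simp [toL_add, hv])
  have hv0 : ofL v = (0 : W X) := hs'.2 (ofL v) s hs hdecomp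
  rw [hdecomp, hv0, zero_add]

lemma minimal_decomp_unique (L : Set (W X)) {u s u' s' : W X}
    (hs : s ∈ L ∧ ∀ v b, b ∈ L → s = v + b → v = 0)
    (hs' : s' ∈ L ∧ ∀ v b, b ∈ L → s' = v + b → v = 0)
    (h : u + s = u' + s') : s = s' := by
  rcases le_total (toL s).length (toL s').length with hle | hle
  · exact (minimal_decomp_unique_aux L hs.1 hs' h hle).symm
  · exact minimal_decomp_unique_aux L hs'.1 hs h.symm hle

section Main

open AddMonoidAlgebra

variable {k : Type*} [Field k] [WellFoundedLT X]

local notation "Rg" => AddMonoidAlgebra k (W X)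

lemma hD : Function.Injective (id : W X → W X) := fun _ _ h => h

lemma hadd : ∀ a b : W X, (id : W X → W X) (a + b) = id a + id b := fun _ _ => rfl

/-- `lead f` : the leading word of `f`. -/
noncomputable def lead (f : Rg) : W X := f.supDegree (id : W X → W X)

/-- `lc f` : the leading coefficient of `f`. -/
noncomputable def lc (f : Rg) : k := f.leadingCoeff (id : W X → W X)

lemma lc_ne_zero {f : Rg} (h : f ≠ 0) : lc f ≠ 0 :=
  (AddMonoidAlgebra.leadingCoeff_ne_zero hD).mpr h

lemma lead_single {a : W X} {r : k} (hr : r ≠ 0) :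
    lead (AddMonoidAlgebra.single a r : Rg) = a :=
  AddMonoidAlgebra.supDegree_single_ne_zero a hr

lemma lc_single {a : W X} {r : k} : lc (AddMonoidAlgebra.single a r : Rg) = r :=
  AddMonoidAlgebra.leadingCoeff_single hD a r

lemma lead_mul' {p q : Rg} (hp : p ≠ 0) (hq : q ≠ 0) :
    lead (p * q) = lead p + lead q :=
  AddMonoidAlgebra.supDegree_mul hD hadd
    (mul_ne_zero (lc_ne_zero hp) (lc_ne_zero hq)) hp hq

lemma lc_mul' {p q : Rg} (hp : p ≠ 0) (hq : q ≠ 0) :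
    lc (p * q) = lc p * lc q := by
  unfold lc AddMonoidAlgebra.leadingCoeff
  rw [show (p * q).supDegree (id : W X → W X) = p.supDegree id + q.supDegree id from
    lead_mul' hp hq]
  exact AddMonoidAlgebra.apply_supDegree_add_supDegree hD hadd

theorem ideal_addMonoidAlgebra_free (I : Ideal Rg) : Module.Free Rg I := by
  classical
  -- the set of leading words of nonzero elements of `I`
  set L : Set (W X) := {a | ∃ f ∈ I, f ≠ 0 ∧ lead f = a} with hLdef
  -- the minimal leading words
  set S : Set (W X) := {a | a ∈ L ∧ ∀ v b, b ∈ L → a = v + b → v = 0} with hSdef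
  -- choice of monic representatives
  have hSel : ∀ s : S, ∃ f : Rg, f ∈ I ∧ f ≠ 0 ∧ lead f = (s : W X) ∧ lc f = 1 := by
    rintro ⟨s, ⟨⟨f, hfI, hf0, hlf⟩, -⟩⟩
    have hcne : lc f ≠ 0 := lc_ne_zero hf0
    have hcne' : (lc f)⁻¹ ≠ 0 := inv_ne_zero hcne
    have hsing : (AddMonoidAlgebra.single (0 : W X) (lc f)⁻¹ : Rg) ≠ 0 := by
      simpa [Finsupp.single_eq_zero] using hcne'
    have hlcprod : lc ((AddMonoidAlgebra.single (0 : W X) (lc f)⁻¹ : Rg) * f) = 1 := by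
      rw [lc_mul' hsing hf0, lc_single, inv_mul_cancel₀ hcne]
    have hprodne : (AddMonoidAlgebra.single (0 : W X) (lc f)⁻¹ : Rg) * f ≠ 0 := by
      intro h
      rw [h] at hlcprod
      simp [lc, AddMonoidAlgebra.leadingCoeff_zero] at hlcprod
    refine ⟨(AddMonoidAlgebra.single (0 : W X) (lc f)⁻¹ : Rg) * f, ?_, hprodne, ?_, hlcprod⟩
    · simpa [smul_eq_mul] using I.smul_mem ((AddMonoidAlgebra.single (0 : W X) (lc f)⁻¹ : Rg)) hfI
    · rw [lead_mul' hsing hf0, lead_single hcne']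
      show 0 + lead f = s
      rw [zero_add, hlf]
  choose g hgI hg0 hglead hglc using hSel
  have hgMonic : ∀ s : S, (g s).Monic (id : W X → W X) := fun s => hglc s
  -- the candidate basis
  let b : S → I := fun s => ⟨g s, hgI s⟩
  have hb_li : LinearIndependent Rg b := by
    rw [linearIndependent_iff]
    intro l hl
    by_contra hl0
    obtain ⟨s₀, hs₀⟩ := Finsupp.support_nonempty_iff.mpr hl0
    have hsum : (∑ s ∈ l.support, l s * g s) = (0 : Rg) := by
      have hcoe : ((Finsupp.linearCombination Rg b l : I) : Rg) = 0 := by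
        rw [hl]; rfl
      rw [Finsupp.linearCombination_apply, Finsupp.sum] at hcoe
      rw [← hcoe]
      push_cast
      rfl
    refine AddMonoidAlgebra.sum_ne_zero_of_injOn_supDegree' (D := (id : W X → W X))
      ?_ ?_ hsum
    · refine ⟨s₀, hs₀, ?_⟩
      have : (l s₀ * g s₀).leadingCoeff (id : W X → W X) = lc (l s₀) :=
        AddMonoidAlgebra.Monic.leadingCoeff_mul_eq_left hD hadd (hgMonic s₀)
      intro h
      rw [h] at this
      exact lc_ne_zero (Finsupp.mem_support_iff.mp hs₀)
        (by simpa [lc, AddMonoidAlgebra.leadingCoeff_zero] using this.symm)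
    · intro s hs t ht heq
      simp only [Function.comp_apply] at heq
      rw [Finset.mem_coe, Finsupp.mem_support_iff] at hs ht
      rw [AddMonoidAlgebra.Monic.supDegree_mul_of_ne_zero_left hD hadd (hgMonic s) hs,
        AddMonoidAlgebra.Monic.supDegree_mul_of_ne_zero_left hD hadd (hgMonic t) ht] at heq
      have hgl : ∀ s : S, AddMonoidAlgebra.supDegree (id : W X → W X) (g s) = (s : W X) :=
        fun s => hglead s
      rw [hgl s, hgl t] at heq
      exact Subtype.ext (minimal_decomp_unique L s.2 t.2 heq)
  have hb_span : ⊤ ≤ Submodule.span Rg (Set.range b) := by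
    have key : ∀ a : W X, ∀ x : I, lead (x : Rg) = a →
        x ∈ Submodule.span Rg (Set.range b) := by
      intro a
      induction a using WellFounded.induction (wellFounded_lt (α := W X)) with
      | _ a ihs =>
        intro x hx
        by_cases hx0 : (x : Rg) = 0
        · have : x = 0 := Subtype.ext hx0
          rw [this]; exact Submodule.zero_mem _
        · have haL : a ∈ L := ⟨(x : Rg), x.2, hx0, hx⟩
          obtain ⟨u, s, hsS, hdecomp⟩ := exists_minimal_decomp L a haL
          have hsS' : s ∈ S := hsS
          set c : k := lc (x : Rg) with hc
          have hcne : c ≠ 0 := lc_ne_zero hx0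
          have hsing : (AddMonoidAlgebra.single u c : Rg) ≠ 0 := by
            simpa [Finsupp.single_eq_zero] using hcne
          set p : Rg := (AddMonoidAlgebra.single u c : Rg) * g ⟨s, hsS'⟩ with hp
          have hplead : lead p = a := by
            rw [hp, lead_mul' hsing (hg0 _), lead_single hcne, hglead, hdecomp]
          have hplc : lc p = c := by
            rw [hp, lc_mul' hsing (hg0 _), lc_single, hglc, mul_one]
          have hle : (x : Rg).supDegree (id : W X → W X) = p.supDegree id := by
            show lead (x : Rg) = lead p
            rw [hx, hplead]
          have hlc2 : (x : Rg).leadingCoeff (id : W X → W X) = p.leadingCoeff id := by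
            show lc (x : Rg) = lc p
            rw [hplc]
          have hpmem : (AddMonoidAlgebra.single u c : Rg) • b ⟨s, hsS'⟩ ∈ Submodule.span Rg (Set.range b) :=
            Submodule.smul_mem _ _ (Submodule.subset_span ⟨⟨s, hsS'⟩, rfl⟩)
          rcases AddMonoidAlgebra.supDegree_sub_lt_of_leadingCoeff_eq hD hle hlc2 with hlt | heq
          · have hcoe : ((x - (AddMonoidAlgebra.single u c : Rg) • b ⟨s, hsS'⟩ : I) : Rg) = (x : Rg) - p := rfl
            have hmem : x - (AddMonoidAlgebra.single u c : Rg) • b ⟨s, hsS'⟩ ∈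
                Submodule.span Rg (Set.range b) := by
              refine ihs (lead ((x : Rg) - p)) ?_ _ (by rw [hcoe])
              rw [← hx]; exact hlt
            have hxeq : x = (x - (AddMonoidAlgebra.single u c : Rg) • b ⟨s, hsS'⟩) +
                (AddMonoidAlgebra.single u c : Rg) • b ⟨s, hsS'⟩ := by abel
            rw [hxeq]
            exact Submodule.add_mem _ hmem hpmem
          · have hxeq : x = (AddMonoidAlgebra.single u c : Rg) • b ⟨s, hsS'⟩ := Subtype.ext heq
            rw [hxeq]; exact hpmem
    exact fun x _ => key (lead (x : Rg)) x rfl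
  exact Module.Free.of_basis (Module.Basis.mk hb_li hb_span)

end Main

end Order

section Transfer

attribute [local instance] RingHomInvPair.of_ringEquiv

lemma free_ideal_of_ringEquiv {R R' : Type*} [Ring R] [Ring R'] (e : R ≃+* R')
    (h : ∀ J : Ideal R', Module.Free R' J) (I : Ideal R) : Module.Free R I := by
  let J : Ideal R' := I.comap (e.symm : R' →+* R)
  haveI := h J
  refine Module.Free.of_equiv (σ := (e.symm : R' →+* R)) (σ' := (e : R →+* R'))
    (M := J) (M' := I) ?_
  exact
    { toFun := fun y => ⟨e.symm y, Ideal.mem_comap.mp y.2⟩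
      map_add' := fun y z => Subtype.ext (map_add e.symm _ _)
      map_smul' := fun r y => Subtype.ext (map_mul e.symm r y)
      invFun := fun x => ⟨e x, Ideal.mem_comap.mpr (by simp [x.2])⟩
      left_inv := fun y => Subtype.ext (e.apply_symm_apply _)
      right_inv := fun x => Subtype.ext (e.symm_apply_apply _) }

end Transfer

end CohnFreeIdeal

/-- (P. M. Cohn) Every left ideal of the free associative algebra `k⟨X⟩` over a field `k`
is a free left `k⟨X⟩`-module. -/
theorem left_ideal_of_free_algebra_is_free (k X : Type*) [Field k]
    (I : Ideal (FreeAlgebra k X)) : Module.Free (FreeAlgebra k X) I := by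
  letI : LinearOrder X := @linearOrderOfSTO X WellOrderingRel inferInstance (Classical.decRel _)
  haveI : WellFoundedLT X := ⟨IsWellFounded.wf (r := WellOrderingRel)⟩
  let e : FreeAlgebra k X ≃+* AddMonoidAlgebra k (CohnFreeIdeal.W X) :=
    (FreeAlgebra.equivMonoidAlgebraFreeMonoid (R := k) (X := X)).toRingEquiv.trans
      (MonoidAlgebra.toAdditive k (FreeMonoid X))
  exact CohnFreeIdeal.free_ideal_of_ringEquiv e
    (fun J => CohnFreeIdeal.ideal_addMonoidAlgebra_free J) I
end
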